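/- With D the elliptical region with foci ±1, semi-axes a = cosh c, b = sinh c (c > 0), and ρ = (a+b)², the Chebyshev polynomial of the first kind T_n satisfies ∬_D |T_n'(z)|² dx dy = (nπ/4)(ρ^n - ρ^{-n}). -/

import Mathlib

open MeasureTheory Complex Real Polynomial Set

section helpers

lemma cos_real_add_real_mul_I (u v : ℝ) :
    Complex.cos (u + v * I) =
      (Real.cos u * Real.cosh v : ℝ) - (Real.sin u * Real.sinh v : ℝ) * I := by
  rw [Complex.cos_add, Complex.cos_mul_I, Complex.sin_mul_I]
  push_cast [← Complex.ofReal_cos, ← Complex.ofReal_sin, ← Complex.ofReal_cosh,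
    ← Complex.ofReal_sinh]
  ring_nf

lemma cos_re' (w : ℂ) : (Complex.cos w).re = Real.cos w.re * Real.cosh w.im := by
  conv_lhs => rw [← Complex.re_add_im w, cos_real_add_real_mul_I]
  simp only [Complex.sub_re, Complex.ofReal_re, Complex.mul_re, Complex.I_re, Complex.I_im,
    Complex.ofReal_im, mul_zero, mul_one, zero_mul, sub_zero, zero_sub, neg_zero]

lemma cos_im' (w : ℂ) : (Complex.cos w).im = -(Real.sin w.re * Real.sinh w.im) := by
  conv_lhs => rw [← Complex.re_add_im w, cos_real_add_real_mul_I]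
  simp only [Complex.sub_im, Complex.ofReal_im, Complex.mul_im, Complex.I_re, Complex.I_im,
    Complex.ofReal_re, mul_zero, mul_one, zero_mul, add_zero, zero_add, zero_sub]

lemma inj_aux (c : ℝ) :
    Set.InjOn Complex.cos {w : ℂ | w.re ∈ Ioo 0 (2*π) ∧ w.im ∈ Ioo 0 c} := by
  rintro x ⟨⟨hx0, hx2⟩, hxi, -⟩ y ⟨⟨hy0, hy2⟩, hyi, -⟩ h
  rcases Complex.cos_eq_cos_iff.1 h with ⟨k, hk | hk⟩
  · have hre : y.re = 2 * k * π + x.re := by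
      rw [hk]; push_cast; simp
    have hπ := Real.pi_pos
    have hk0 : k = 0 := by
      rcases lt_trichotomy k 0 with h' | h' | h'
      · have : (k : ℝ) ≤ -1 := by exact_mod_cast Int.le_sub_one_of_lt h'
        nlinarith
      · exact h'
      · have : (1 : ℝ) ≤ k := by exact_mod_cast h'
        nlinarith
    rw [hk, hk0]; push_cast; ring
  · exfalso
    have : y.im = -x.im := by rw [hk]; push_cast; simp
    linarith

lemma subset_aux {c : ℝ} (hc : 0 < c) :
    Complex.cos '' {w : ℂ | w.re ∈ Ioo 0 (2*π) ∧ w.im ∈ Ioo 0 c} ⊆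
      {z : ℂ | (Real.sinh c) ^ 2 * z.re ^ 2 + (Real.cosh c) ^ 2 * z.im ^ 2 <
        (Real.cosh c) ^ 2 * (Real.sinh c) ^ 2} := by
  rintro - ⟨w, ⟨⟨hu0, hu2⟩, hv0, hvc⟩, rfl⟩
  set u := w.re; set v := w.im
  simp only [Set.mem_setOf_eq, cos_re', cos_im']
  have h1 : Real.cosh v < Real.cosh c := Real.cosh_lt_cosh.2 (by rw [abs_of_pos hv0, abs_of_pos hc]; exact hvc)
  have h2 : Real.sinh v < Real.sinh c := Real.sinh_lt_sinh.2 hvc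
  have h3 : 0 < Real.sinh v := Real.sinh_pos_iff.2 hv0
  have h4 : 0 < Real.cosh v := Real.cosh_pos _
  have h5 : 0 < Real.sinh c := Real.sinh_pos_iff.2 hc
  have h6 : 0 < Real.cosh c := Real.cosh_pos _
  have hp : Real.sin u ^ 2 + Real.cos u ^ 2 = 1 := Real.sin_sq_add_cos_sq u
  have hA0 : Real.sinh c * Real.cosh v < Real.cosh c * Real.sinh c := by nlinarith
  have hB0 : Real.cosh c * Real.sinh v < Real.cosh c * Real.sinh c := by nlinarith
  have hA : (Real.sinh c * Real.cosh v) ^ 2 < (Real.cosh c * Real.sinh c) ^ 2 := by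
    nlinarith [mul_pos h5 h4, mul_pos h6 h3]
  have hB : (Real.cosh c * Real.sinh v) ^ 2 < (Real.cosh c * Real.sinh c) ^ 2 := by
    nlinarith [mul_pos h5 h4, mul_pos h6 h3]
  rw [show Real.cosh c ^ 2 * Real.sinh c ^ 2 = (Real.cosh c * Real.sinh c) ^ 2 by ring]
  have key : Real.sinh c ^ 2 * (Real.cos u * Real.cosh v) ^ 2 +
      Real.cosh c ^ 2 * (-(Real.sin u * Real.sinh v)) ^ 2 ≤
      max ((Real.sinh c * Real.cosh v) ^ 2) ((Real.cosh c * Real.sinh v) ^ 2) := by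
    have l1 := le_max_left ((Real.sinh c * Real.cosh v) ^ 2) ((Real.cosh c * Real.sinh v) ^ 2)
    have l2 := le_max_right ((Real.sinh c * Real.cosh v) ^ 2) ((Real.cosh c * Real.sinh v) ^ 2)
    nlinarith [sq_nonneg (Real.sin u), sq_nonneg (Real.cos u)]
  exact lt_of_le_of_lt key (max_lt hA hB)

lemma cover_aux {c : ℝ} (hc : 0 < c) {z : ℂ}
    (hz : (Real.sinh c) ^ 2 * z.re ^ 2 + (Real.cosh c) ^ 2 * z.im ^ 2 <
        (Real.cosh c) ^ 2 * (Real.sinh c) ^ 2) (him : z.im ≠ 0) :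
    z ∈ Complex.cos '' {w : ℂ | w.re ∈ Ioo 0 (2*π) ∧ w.im ∈ Ioo 0 c} := by
  obtain ⟨w0, hw0⟩ := Complex.cos_surjective z
  -- make the imaginary part positive
  have him0 : w0.im ≠ 0 := by
    intro h
    apply him
    rw [← hw0, cos_im', h, Real.sinh_zero, mul_zero, neg_zero]
  have : ∃ w1 : ℂ, Complex.cos w1 = z ∧ 0 < w1.im := by
    rcases lt_or_gt_of_ne him0 with h | h
    · exact ⟨-w0, by rw [Complex.cos_neg, hw0], by simpa using h⟩
    · exact ⟨w0, hw0, h⟩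
  obtain ⟨w1, hw1, hv0⟩ := this
  set v := w1.im with hv
  -- v < c
  have hvc : v < c := by
    by_contra hle
    push_neg at hle
    have h1 : Real.cosh c ≤ Real.cosh v :=
      Real.cosh_le_cosh.2 (by rw [abs_of_pos hv0, abs_of_pos hc]; exact hle)
    have h2 : Real.sinh c ≤ Real.sinh v := Real.sinh_le_sinh.2 hle
    have h5 : 0 < Real.sinh c := Real.sinh_pos_iff.2 hc
    have h6 : 0 < Real.cosh c := Real.cosh_pos _
    have hp : Real.sin w1.re ^ 2 + Real.cos w1.re ^ 2 = 1 := Real.sin_sq_add_cos_sq _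
    rw [← hw1, cos_re', cos_im'] at hz
    have hch : Real.cosh c ^ 2 ≤ Real.cosh w1.im ^ 2 := by nlinarith [Real.cosh_pos w1.im]
    have hsh : Real.sinh c ^ 2 ≤ Real.sinh w1.im ^ 2 := by nlinarith [Real.sinh_pos_iff.2 hv0]
    have t1 : 0 ≤ Real.sinh c ^ 2 * (Real.cos w1.re ^ 2 * (Real.cosh w1.im ^ 2 - Real.cosh c ^ 2)) :=
      mul_nonneg (sq_nonneg _) (mul_nonneg (sq_nonneg _) (by linarith))
    have t2 : 0 ≤ Real.cosh c ^ 2 * (Real.sin w1.re ^ 2 * (Real.sinh w1.im ^ 2 - Real.sinh c ^ 2)) :=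
      mul_nonneg (sq_nonneg _) (mul_nonneg (sq_nonneg _) (by linarith))
    nlinarith [t1, t2, mul_pos (mul_pos h6 h6) (mul_pos h5 h5)]
  -- shift the real part into [0, 2π)
  have hπ := Real.pi_pos
  set k : ℤ := ⌊w1.re / (2 * π)⌋ with hk
  set w : ℂ := w1 - (k : ℂ) * (2 * π) with hwdef
  have hcosw : Complex.cos w = z := by
    rw [hwdef, sub_eq_add_neg, ← neg_mul, ← Int.cast_neg]
    rw [show ((-k : ℤ) : ℂ) * (2 * (π : ℂ)) = ((-k : ℤ) : ℂ) * (2 * π) from rfl]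
    rw [Complex.cos_add_int_mul_two_pi, hw1]
  have hwim : w.im = v := by simp [hwdef, hv]
  have hwre : w.re = w1.re - k * (2 * π) := by simp [hwdef]
  have hre0 : 0 ≤ w.re := by
    rw [hwre]
    have h := Int.floor_le (w1.re / (2 * π))
    rw [← hk, le_div_iff₀ (by positivity)] at h
    linarith
  have hre2 : w.re < 2 * π := by
    rw [hwre]
    have h := Int.lt_floor_add_one (w1.re / (2 * π))
    rw [← hk, div_lt_iff₀ (by positivity)] at h
    push_cast at h ⊢
    linarith
  have hrene : w.re ≠ 0 := by
    intro h0
    apply him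
    rw [← hcosw, cos_im', h0, Real.sin_zero, zero_mul, neg_zero]
  exact ⟨w, ⟨⟨lt_of_le_of_ne hre0 (Ne.symm hrene), hre2⟩, by rw [hwim]; exact hv0,
    by rw [hwim]; exact hvc⟩, hcosw⟩

lemma integral_cosh_lin {N : ℝ} (hN : 0 < N) (a b : ℝ) :
    ∫ v in a..b, Real.cosh (2 * N * v) =
      Real.sinh (2 * N * b) / (2 * N) - Real.sinh (2 * N * a) / (2 * N) := by
  have hder : ∀ v ∈ Set.uIcc a b, HasDerivAt (fun v => Real.sinh (2 * N * v) / (2 * N))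
      (Real.cosh (2 * N * v)) v := by
    intro v _
    have h1 : HasDerivAt (fun v : ℝ => 2 * N * v) (2 * N) v := by
      simpa using (hasDerivAt_id v).const_mul (2 * N)
    have h2 := (Real.hasDerivAt_sinh (2 * N * v)).comp v h1
    have h3 := h2.div_const (2 * N)
    simpa [mul_div_assoc, mul_div_cancel_right₀ _ (by positivity : (2:ℝ) * N ≠ 0)] using h3
  exact intervalIntegral.integral_eq_sub_of_hasDerivAt hder
    ((Real.continuous_cosh.comp (continuous_const.mul continuous_id)).intervalIntegrable a b)

lemma integral_cos_lin {N : ℝ} (hN : 0 < N) (a b : ℝ) :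
    ∫ u in a..b, Real.cos (2 * N * u) =
      Real.sin (2 * N * b) / (2 * N) - Real.sin (2 * N * a) / (2 * N) := by
  have hder : ∀ u ∈ Set.uIcc a b, HasDerivAt (fun u => Real.sin (2 * N * u) / (2 * N))
      (Real.cos (2 * N * u)) u := by
    intro u _
    have h1 : HasDerivAt (fun u : ℝ => 2 * N * u) (2 * N) u := by
      simpa using (hasDerivAt_id u).const_mul (2 * N)
    have h2 := (Real.hasDerivAt_sin (2 * N * u)).comp u h1
    have h3 := h2.div_const (2 * N)
    simpa [mul_div_assoc, mul_div_cancel_right₀ _ (by positivity : (2:ℝ) * N ≠ 0)] using h3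
  exact intervalIntegral.integral_eq_sub_of_hasDerivAt hder
    ((Real.continuous_cos.comp (continuous_const.mul continuous_id)).intervalIntegrable a b)

-- full double integral
lemma double_calc {c : ℝ} (hc : 0 < c) {n : ℕ} (hn : 1 ≤ n) :
    ∫ u in (0:ℝ)..(2*π), (∫ v in (0:ℝ)..c,
        (n:ℝ)^2 * ((Real.cosh (2 * n * v) - Real.cos (2 * n * u)) / 2)) =
      (n : ℝ) * π * Real.sinh (2 * n * c) / 2 := by
  have hN : (0:ℝ) < n := by exact_mod_cast hn
  have hinner : ∀ u : ℝ, ∫ v in (0:ℝ)..c,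
      (n:ℝ)^2 * ((Real.cosh (2 * n * v) - Real.cos (2 * n * u)) / 2) =
      (n:ℝ)^2 / 2 * (Real.sinh (2 * n * c) / (2 * n)) - (n:ℝ)^2 / 2 * (Real.cos (2*n*u) * c) := by
    intro u
    have h1 : ∫ v in (0:ℝ)..c, (n:ℝ)^2 * ((Real.cosh (2 * n * v) - Real.cos (2 * n * u)) / 2) =
        (n:ℝ)^2/2 * ∫ v in (0:ℝ)..c, (Real.cosh (2 * n * v) - Real.cos (2 * n * u)) := by
      rw [← intervalIntegral.integral_const_mul]
      congr 1; ext v; ring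
    rw [h1, intervalIntegral.integral_sub
        (Continuous.intervalIntegrable (by continuity) 0 c)
        intervalIntegrable_const, integral_cosh_lin hN, intervalIntegral.integral_const]
    simp [Real.sinh_zero]
    ring
  simp_rw [hinner]
  rw [intervalIntegral.integral_sub intervalIntegrable_const (Continuous.intervalIntegrable (by continuity) _ _)]
  rw [intervalIntegral.integral_const, intervalIntegral.integral_const_mul]
  have : ∫ u in (0:ℝ)..(2*π), Real.cos (2*n*u) * c = 0 := by
    rw [intervalIntegral.integral_mul_const, integral_cos_lin hN]
    have : Real.sin (2 * n * (2*π)) = 0 := by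
      have : 2 * (n:ℝ) * (2 * π) = (((4 * n : ℕ) : ℝ)) * π := by push_cast; ring
      rw [this, Real.sin_nat_mul_pi]
    simp [this]
  rw [this]
  rw [smul_eq_mul]
  field_simp
  ring

lemma det_mul_aux (a : ℂ) :
    LinearMap.det (((ContinuousLinearMap.smulRight (1 : ℂ →L[ℂ] ℂ) a).restrictScalars ℝ) :
      ℂ →ₗ[ℝ] ℂ) = Complex.normSq a := by
  rw [← LinearMap.det_toMatrix Complex.basisOneI, Matrix.det_fin_two]
  simp [LinearMap.toMatrix_apply, Complex.coe_basisOneI_repr, Complex.coe_basisOneI,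
    Complex.normSq_apply]

lemma sin_real_add_real_mul_I (u v : ℝ) :
    Complex.sin (u + v * I) =
      (Real.sin u * Real.cosh v : ℝ) + (Real.cos u * Real.sinh v : ℝ) * I := by
  rw [Complex.sin_add, Complex.cos_mul_I, Complex.sin_mul_I]
  push_cast [← Complex.ofReal_cos, ← Complex.ofReal_sin, ← Complex.ofReal_cosh,
    ← Complex.ofReal_sinh]
  ring

lemma norm_sin_sq (u v : ℝ) :
    ‖Complex.sin (u + v * I)‖ ^ 2 =
      Real.sin u ^ 2 * Real.cosh v ^ 2 + Real.cos u ^ 2 * Real.sinh v ^ 2 := by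
  rw [sin_real_add_real_mul_I, Complex.sq_norm,
    Complex.normSq_add_mul_I]
  ring

lemma trig_id (x y : ℝ) :
    Real.sin x ^ 2 * Real.cosh y ^ 2 + Real.cos x ^ 2 * Real.sinh y ^ 2 =
      (Real.cosh (2 * y) - Real.cos (2 * x)) / 2 := by
  rw [Real.cosh_two_mul, Real.cos_two_mul', Real.sin_sq, Real.sinh_sq]
  ring

lemma nullim : (volume : Measure ℂ) {z : ℂ | z.im = 0} = 0 := by
  have h : {z : ℂ | z.im = 0} =
      Complex.measurableEquivRealProd ⁻¹' (Set.univ ×ˢ ({0} : Set ℝ)) := by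
    ext z
    simp [Complex.measurableEquivRealProd_apply, eq_comm]
  rw [h, Complex.volume_preserving_equiv_real_prod.measure_preimage
    ((MeasurableSet.univ.prod (measurableSet_singleton 0)).nullMeasurableSet)]
  rw [Measure.volume_eq_prod, Measure.prod_prod]
  simp

end helpers

set_option maxHeartbeats 1000000 in
/-- Area integral of `|Tₙ'|²` over the elliptical region with semi-axes
`a = cosh c`, `b = sinh c`: equals `(nπ/4)(ρⁿ - ρ⁻ⁿ)` where `ρ = (a+b)²`. -/
theorem chebyshevT_deriv_norm_ellipse (c : ℝ) (hc : 0 < c) (n : ℕ) :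
    (∫ z in {z : ℂ | (Real.sinh c) ^ 2 * z.re ^ 2 + (Real.cosh c) ^ 2 * z.im ^ 2 <
        (Real.cosh c) ^ 2 * (Real.sinh c) ^ 2},
      ‖(Polynomial.derivative (Polynomial.Chebyshev.T ℂ n)).eval z‖ ^ 2) =
      n * π / 4 *
        ((Real.cosh c + Real.sinh c) ^ (2 * n) -
          ((Real.cosh c + Real.sinh c) ^ (2 * n))⁻¹) := by
  rcases Nat.eq_zero_or_pos n with rfl | hn
  · simp [Polynomial.Chebyshev.T_zero]
  set E : Set ℂ := {z : ℂ | (Real.sinh c) ^ 2 * z.re ^ 2 + (Real.cosh c) ^ 2 * z.im ^ 2 <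
      (Real.cosh c) ^ 2 * (Real.sinh c) ^ 2} with hE
  set S : Set ℂ := {w : ℂ | w.re ∈ Ioo 0 (2*π) ∧ w.im ∈ Ioo 0 c} with hS
  set g : ℂ → ℝ := fun z => ‖(Polynomial.derivative (Polynomial.Chebyshev.T ℂ n)).eval z‖ ^ 2
    with hg
  -- step 1 : replace E by cos '' S
  have hstep1 : ∫ z in E, g z = ∫ z in Complex.cos '' S, g z := by
    apply setIntegral_congr_set
    rw [MeasureTheory.ae_eq_set]
    constructor
    · refine measure_mono_null (fun z hz => ?_) nullim
      rcases hz with ⟨hzE, hznot⟩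
      by_contra him
      exact hznot (cover_aux hc hzE him)
    · rw [Set.diff_eq_empty.2 (subset_aux hc)]
      exact measure_empty
  -- step 2 : change of variables
  have hSm : MeasurableSet S :=
    Complex.measurableEquivRealProd.measurable (measurableSet_Ioo.prod measurableSet_Ioo)
  have hder : ∀ w ∈ S, HasFDerivWithinAt Complex.cos
      (((ContinuousLinearMap.smulRight (1 : ℂ →L[ℂ] ℂ) (-Complex.sin w)).restrictScalars ℝ))
      S w := fun w _ =>
    (((Complex.hasDerivAt_cos w).hasFDerivAt).restrictScalars ℝ).hasFDerivWithinAt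
  have hstep2 := integral_image_eq_integral_abs_det_fderiv_smul volume hSm hder (inj_aux c) g
  -- pointwise simplification of the transformed integrand
  have hpt : ∀ w : ℂ,
      |(((ContinuousLinearMap.smulRight (1 : ℂ →L[ℂ] ℂ) (-Complex.sin w)).restrictScalars
        ℝ)).det| • g (Complex.cos w) = (n : ℝ)^2 * ‖Complex.sin ((n : ℂ) * w)‖ ^ 2 := by
    intro w
    have hdet : (((ContinuousLinearMap.smulRight (1 : ℂ →L[ℂ] ℂ)
        (-Complex.sin w)).restrictScalars ℝ)).det = Complex.normSq (Complex.sin w) := by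
      rw [ContinuousLinearMap.det, det_mul_aux, Complex.normSq_neg]
    rw [hdet, _root_.abs_of_nonneg (Complex.normSq_nonneg _), smul_eq_mul, hg]
    have hTd : (Polynomial.derivative (Polynomial.Chebyshev.T ℂ (n : ℤ))) =
        ((n : ℤ) : ℂ[X]) * Polynomial.Chebyshev.U ℂ ((n : ℤ) - 1) :=
      Polynomial.Chebyshev.T_derivative_eq_U (n : ℤ)
    rw [hTd]
    have hU := Polynomial.Chebyshev.U_complex_cos w ((n : ℤ) - 1)
    have hA : Polynomial.eval (Complex.cos w) (Polynomial.Chebyshev.U ℂ ((n : ℤ) - 1)) *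
        Complex.sin w = Complex.sin ((n : ℂ) * w) := by
      rw [hU]; push_cast; ring_nf
    have hns : Complex.normSq (Complex.sin w) = ‖Complex.sin w‖ ^ 2 := by
      rw [Complex.sq_norm]
    simp only [Polynomial.eval_mul, Polynomial.eval_intCast, hns]
    rw [← hA, norm_mul, norm_mul]
    push_cast
    rw [Complex.norm_natCast]
    ring
  -- step 3 : transfer to ℝ × ℝ
  set F : ℝ × ℝ → ℝ := fun p => (n:ℝ)^2 * ‖Complex.sin ((n:ℂ) * (p.1 + p.2 * I))‖ ^ 2 with hF
  have hpre : S = Complex.measurableEquivRealProd ⁻¹' ((Ioo (0:ℝ) (2*π)) ×ˢ (Ioo (0:ℝ) c)) := by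
    ext w
    simp [hS, Set.mem_prod]
  have hstep3 : (∫ x in S,
      |(((ContinuousLinearMap.smulRight (1 : ℂ →L[ℂ] ℂ) (-Complex.sin x)).restrictScalars
        ℝ)).det| • g (Complex.cos x)) =
      ∫ p in (Ioo (0:ℝ) (2*π)) ×ˢ (Ioo (0:ℝ) c), F p := by
    rw [← (Complex.volume_preserving_equiv_real_prod).setIntegral_preimage_emb
      (Complex.measurableEquivRealProd.measurableEmbedding) F _, ← hpre]
    apply setIntegral_congr_fun hSm
    intro x _
    dsimp only
    rw [hpt x]
    simp only [hF, Complex.measurableEquivRealProd_apply]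
    rw [Complex.re_add_im]
  -- step 4 : Fubini and explicit computation
  have hcont : Continuous F := by
    have h0 : Continuous fun p : ℝ × ℝ => (n:ℂ) * ((p.1:ℂ) + (p.2:ℂ) * I) := by fun_prop
    exact continuous_const.mul ((Complex.continuous_sin.comp h0).norm.pow 2)
  have hint : IntegrableOn F ((Ioo (0:ℝ) (2*π)) ×ˢ (Ioo (0:ℝ) c)) :=
    (hcont.continuousOn.integrableOn_compact (isCompact_Icc.prod isCompact_Icc)).mono_set
      (Set.prod_mono Ioo_subset_Icc_self Ioo_subset_Icc_self)
  have hpi := Real.pi_pos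
  have hstep4 : (∫ p in (Ioo (0:ℝ) (2*π)) ×ˢ (Ioo (0:ℝ) c), F p) =
      (n : ℝ) * π * Real.sinh (2 * n * c) / 2 := by
    rw [Measure.volume_eq_prod] at hint ⊢
    rw [MeasureTheory.setIntegral_prod F hint]
    have hFpt : ∀ u v : ℝ, F (u, v) =
        (n:ℝ)^2 * ((Real.cosh (2 * n * v) - Real.cos (2 * n * u)) / 2) := by
      intro u v
      rw [hF]
      have harg : (n:ℂ) * ((u:ℂ) + (v:ℂ) * I) = ((n * u : ℝ) : ℂ) + ((n * v : ℝ) : ℂ) * I := by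
        push_cast; ring
      simp only []
      rw [harg, norm_sin_sq, trig_id]
      ring_nf
    simp_rw [hFpt]
    have h1 : ∀ u : ℝ, (∫ v in Ioo (0:ℝ) c,
        (n:ℝ)^2 * ((Real.cosh (2 * n * v) - Real.cos (2 * n * u)) / 2)) =
        ∫ v in (0:ℝ)..c, (n:ℝ)^2 * ((Real.cosh (2 * n * v) - Real.cos (2 * n * u)) / 2) := by
      intro u
      rw [intervalIntegral.integral_of_le hc.le, integral_Ioc_eq_integral_Ioo]
    simp_rw [h1]
    rw [← integral_Ioc_eq_integral_Ioo, ← intervalIntegral.integral_of_le (by positivity :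
      (0:ℝ) ≤ 2*π)]
    exact double_calc hc hn
  -- conclude
  rw [hstep1, hstep2, hstep3, hstep4]
  have hρ : (Real.cosh c + Real.sinh c) ^ (2*n) = Real.exp (2 * n * c) := by
    rw [Real.cosh_add_sinh, ← Real.exp_nat_mul]
    push_cast; ring_nf
  rw [hρ, Real.sinh_eq, Real.exp_neg]
  ring
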